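/- For every r ≥ 4 there exists a constant C(r) > 0 such that the following holds. If n is sufficiently large and p > 0 satisfies p·n^{1/λ(r)}·log n ≤ 1/(2e), then for every edge e of K_n and every integer m with λ(r) + 1 ≤ m ≤ C(r,2)·log n, the expected number of sets F of m edges of G_{n,p} such that both endpoints of e lie in the vertex set of F and m ≥ λ(r)·(v(F) − 2) + 1 is at most ((m + C(r))/(2·C(r,2)·log n))^{m − λ(r)}. Here v(F) denotes the number of vertices incident to an edge of F or equal to an endpoint of e. -/

import Mathlib

open Finset

/-- The edge set of the copy of `H` under the injection `f`. -/
def copyEdges {W V : Type*} (H : SimpleGraph W) (f : W ↪ V) : Set (Sym2 V) :=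
  Sym2.map f '' H.edgeSet

/-- One step of the `H`-bootstrap process: infect every edge `e` for which some copy of `H`
contains `e` and has all its other edges already infected. -/
def bootStep {W V : Type*} (H : SimpleGraph W) (E : Set (Sym2 V)) : Set (Sym2 V) :=
  E ∪ {e | ∃ f : W ↪ V, e ∈ copyEdges H f ∧ copyEdges H f ⊆ insert e E}

/-- The closure of `E` under the `H`-bootstrap process. -/
def bootClosure {W V : Type*} (H : SimpleGraph W) (E : Set (Sym2 V)) : Set (Sym2 V) :=
  ⋃ t, (bootStep H)^[t] E

/-- `E` percolates in the `H`-bootstrap process on the complete graph on `V`. -/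
def Percolates {W V : Type*} (H : SimpleGraph W) (E : Set (Sym2 V)) : Prop :=
  bootClosure H E = (⊤ : SimpleGraph V).edgeSet

/-- The expectation of `X` under the Erdős–Rényi random graph `G_{n,p}`,
written as a sum over all graphs on `[n]`, weighted by their probabilities. -/
noncomputable def gnpExp (n : ℕ) (p : ℝ) (X : Finset (Sym2 (Fin n)) → ℝ) : ℝ :=
  ∑ E ∈ (⊤ : SimpleGraph (Fin n)).edgeFinset.powerset,
    p ^ E.card * (1 - p) ^ ((⊤ : SimpleGraph (Fin n)).edgeFinset.card - E.card) * X E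

/- probability of event `A` under `G_{n,p}` -/
open Classical in
noncomputable def gnpProb (n : ℕ) (p : ℝ) (A : Finset (Sym2 (Fin n)) → Prop) : ℝ :=
  gnpExp n p (fun E => if A E then 1 else 0)

/-- The critical probability for `H`-bootstrap percolation on `K_n`. -/
noncomputable def pc {W : Type*} (n : ℕ) (H : SimpleGraph W) : ℝ :=
  sInf {p : ℝ | p ∈ Set.Icc (0 : ℝ) 1 ∧
    1 / 2 ≤ gnpProb n p (fun E => Percolates H (↑E : Set (Sym2 (Fin n))))}

/-- `λ(r) = (C(r,2) - 2)/(r - 2)`. -/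
noncomputable def lam (r : ℕ) : ℝ := ((r.choose 2 : ℝ) - 2) / ((r : ℝ) - 2)


/-! Auxiliary lemmas -/

lemma sum_pow_mul_one_sub (p : ℝ) {α : Type*} [DecidableEq α] (s : Finset α) :
    ∑ t ∈ s.powerset, p ^ t.card * (1 - p) ^ (s.card - t.card) = 1 := by
  calc ∑ t ∈ s.powerset, p ^ t.card * (1 - p) ^ (s.card - t.card)
      = ∑ t ∈ s.powerset, p ^ t.card * (1 - p) ^ ((s \ t).card) := by
        refine Finset.sum_congr rfl fun t ht => ?_
        rw [card_sdiff_of_subset (mem_powerset.mp ht)]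
    _ = ∑ t ∈ s.powerset, (∏ _i ∈ t, p) * ∏ _i ∈ s \ t, (1 - p) := by
        simp [prod_const]
    _ = ∏ _i ∈ s, (p + (1 - p)) := (Finset.prod_add _ _ s).symm
    _ = 1 := by simp

lemma sum_superset_weight (p : ℝ) {α : Type*} [DecidableEq α] (M F : Finset α) (hF : F ⊆ M) :
    ∑ E ∈ M.powerset.filter (fun E => F ⊆ E), p ^ E.card * (1 - p) ^ (M.card - E.card)
      = p ^ F.card := by
  have key : ∑ E ∈ M.powerset.filter (fun E => F ⊆ E),
      p ^ E.card * (1 - p) ^ (M.card - E.card)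
      = ∑ D ∈ (M \ F).powerset,
          p ^ F.card * (p ^ D.card * (1 - p) ^ ((M \ F).card - D.card)) := by
    refine Finset.sum_nbij' (fun E => E \ F) (fun D => D ∪ F) ?_ ?_ ?_ ?_ ?_
    · intro E hE
      simp only [mem_filter, mem_powerset] at hE
      exact mem_powerset.mpr (sdiff_subset_sdiff hE.1 le_rfl)
    · intro D hD
      simp only [mem_powerset] at hD
      refine mem_filter.mpr ⟨mem_powerset.mpr (union_subset (hD.trans sdiff_subset) hF),
        subset_union_right⟩
    · intro E hE
      simp only [mem_filter, mem_powerset] at hE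
      exact sdiff_union_of_subset hE.2
    · intro D hD
      simp only [mem_powerset] at hD
      have : Disjoint D F := ((sdiff_disjoint : Disjoint (M \ F) F)).mono_left hD
      exact union_sdiff_cancel_right this
    · intro E hE
      simp only [mem_filter, mem_powerset] at hE
      have h1 : (E \ F).card + F.card = E.card := card_sdiff_add_card_eq_card hE.2
      have h2 : (M \ F).card = M.card - F.card := card_sdiff_of_subset hF
      have h3 : F.card ≤ E.card := card_le_card hE.2
      have h4 : E.card ≤ M.card := card_le_card hE.1
      rw [← h1, pow_add, h2]
      rw [show M.card - ((E \ F).card + F.card) = M.card - F.card - (E \ F).card by omega]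
      ring
  rw [key, ← Finset.mul_sum, sum_pow_mul_one_sub, mul_one]

lemma pow_self_le_factorial_mul_exp (m : ℕ) :
    (m : ℝ) ^ m ≤ (m.factorial : ℝ) * Real.exp 1 ^ m := by
  induction m with
  | zero => simp
  | succ k ih =>
    have hk1 : ((k:ℝ)+1)^k ≤ (k:ℝ)^k * Real.exp 1 := by
      rcases Nat.eq_zero_or_pos k with hk | hk
      · subst hk; simp
      · have hk' : (0:ℝ) < k := by exact_mod_cast hk
        have e1 : ((k:ℝ)+1) ≤ (k:ℝ) * Real.exp (1/(k:ℝ)) := by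
          have h := Real.add_one_le_exp (1/(k:ℝ))
          have h2 : (k:ℝ) * (1/(k:ℝ) + 1) ≤ (k:ℝ) * Real.exp (1/(k:ℝ)) :=
            mul_le_mul_of_nonneg_left h (le_of_lt hk')
          have h3 : (k:ℝ) * (1/(k:ℝ) + 1) = (k:ℝ) + 1 := by field_simp; ring
          linarith
        calc ((k:ℝ)+1)^k ≤ ((k:ℝ) * Real.exp (1/(k:ℝ)))^k := by
              apply pow_le_pow_left₀ (by positivity) e1
          _ = (k:ℝ)^k * Real.exp (1/(k:ℝ))^k := mul_pow _ _ _
          _ = (k:ℝ)^k * Real.exp 1 := by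
              rw [← Real.exp_nat_mul]
              congr 1
              field_simp
    have hkc : ((k+1 : ℕ):ℝ) = (k:ℝ) + 1 := by push_cast; ring
    calc ((k+1:ℕ):ℝ)^(k+1) = ((k:ℝ)+1) * ((k:ℝ)+1)^k := by rw [hkc]; ring
      _ ≤ ((k:ℝ)+1) * ((k:ℝ)^k * Real.exp 1) := by
          apply mul_le_mul_of_nonneg_left hk1 (by positivity)
      _ ≤ ((k:ℝ)+1) * ((k.factorial : ℝ) * Real.exp 1 ^ k * Real.exp 1) := by
          apply mul_le_mul_of_nonneg_left _ (by positivity)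
          apply mul_le_mul_of_nonneg_right ih (le_of_lt (Real.exp_pos 1))
      _ = ((k+1).factorial : ℝ) * Real.exp 1 ^ (k+1) := by
          rw [Nat.factorial_succ]
          push_cast
          ring

lemma fiber_count_bound {α : Type*} [Fintype α] [DecidableEq α]
    (S : Finset (Finset (Sym2 α))) (T : Finset (Sym2 α) → Finset α)
    (a b : α) (hne : a ≠ b) (m v : ℕ) (h2v : 2 ≤ v)
    (hT : ∀ F ∈ S, ∀ f ∈ F, ∀ u ∈ f, u ∈ T F)
    (hab : ∀ F ∈ S, a ∈ T F ∧ b ∈ T F)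
    (hcard : ∀ F ∈ S, F.card = m) (hv : ∀ F ∈ S, (T F).card = v) :
    S.card ≤ (Fintype.card α).choose (v - 2) * ((v + 1).choose 2).choose m := by
  classical
  have hcab : ({a, b} : Finset α).card = 2 := by
    rw [Finset.card_insert_of_notMem (by simp [hne]), Finset.card_singleton]
  have hle : S.card ≤ ((Finset.univ.powersetCard (v-2) : Finset (Finset α)).sigma
      (fun W => ((W ∪ {a, b}).sym2.powersetCard m))).card := by
    apply Finset.card_le_card_of_injOn
      (fun F => (⟨T F \ {a, b}, F⟩ : (_ : Finset α) × Finset (Sym2 α)))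
    · intro F hF
      have hsub : ({a, b} : Finset α) ⊆ T F := by
        intro x hx
        simp only [Finset.mem_insert, Finset.mem_singleton] at hx
        rcases hx with rfl | rfl
        · exact (hab F hF).1
        · exact (hab F hF).2
      have h2v : 2 ≤ (T F).card := by
        calc 2 = ({a, b} : Finset α).card := hcab.symm
          _ ≤ (T F).card := Finset.card_le_card hsub
      refine Finset.mem_sigma.mpr ⟨?_, ?_⟩
      · refine Finset.mem_powersetCard.mpr ⟨Finset.subset_univ _, ?_⟩
        rw [Finset.card_sdiff_of_subset hsub, hcab, hv F hF]
      · have hU : (T F \ {a, b}) ∪ ({a, b} : Finset α) = T F :=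
          Finset.sdiff_union_of_subset hsub
        rw [hU]
        refine Finset.mem_powersetCard.mpr ⟨?_, hcard F hF⟩
        intro f hf
        rw [Finset.mem_sym2_iff]
        exact fun u hu => hT F hF f hf u hu
    · intro F1 _ F2 _ hEq
      exact eq_of_heq (Sigma.mk.inj_iff.mp hEq).2
  refine hle.trans ?_
  rw [Finset.card_sigma]
  have hterm : ∀ W ∈ (Finset.univ.powersetCard (v-2) : Finset (Finset α)),
      ((W ∪ ({a, b} : Finset α)).sym2.powersetCard m).card ≤ ((v + 1).choose 2).choose m := by
    intro W hW
    rw [Finset.card_powersetCard]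
    apply Nat.choose_le_choose
    rw [Finset.card_sym2]
    apply Nat.choose_le_choose
    have h1 := Finset.card_union_le W ({a, b} : Finset α)
    have hWc := (Finset.mem_powersetCard.mp hW).2
    omega
  calc ∑ W ∈ Finset.univ.powersetCard (v-2),
        ((W ∪ ({a, b} : Finset α)).sym2.powersetCard m).card
      ≤ ∑ _W ∈ (Finset.univ.powersetCard (v-2) : Finset (Finset α)),
          ((v + 1).choose 2).choose m := Finset.sum_le_sum hterm
    _ = (Fintype.card α).choose (v - 2) * ((v + 1).choose 2).choose m := by
        rw [Finset.sum_const, Finset.card_powersetCard, Finset.card_univ, smul_eq_mul]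

lemma exists_good_N (q : ℕ) (c : ℝ) (hc : 0 < c) :
    ∃ N : ℕ, ∀ n : ℕ, N ≤ n →
      3 ≤ n ∧ (40:ℝ) ≤ Real.log n ∧ 2*(q:ℝ)*Real.log n ≤ (n:ℝ) ^ c := by
  have h2 : Filter.Tendsto (fun n : ℕ => Real.log n) Filter.atTop Filter.atTop :=
    Real.tendsto_log_atTop.comp tendsto_natCast_atTop_atTop
  have hlog : ∀ᶠ n : ℕ in Filter.atTop, (40:ℝ) ≤ Real.log n := h2.eventually_ge_atTop 40
  have ho : Real.log =o[Filter.atTop] fun x : ℝ => x ^ c := isLittleO_log_rpow_atTop hc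
  have hbound : ∀ᶠ x : ℝ in Filter.atTop,
      ‖Real.log x‖ ≤ (1/(2*(q:ℝ)+1)) * ‖x ^ c‖ := ho.def (by positivity)
  have hboundN : ∀ᶠ n : ℕ in Filter.atTop,
      ‖Real.log (n:ℝ)‖ ≤ (1/(2*(q:ℝ)+1)) * ‖(n:ℝ) ^ c‖ :=
    tendsto_natCast_atTop_atTop.eventually hbound
  have h3 : ∀ᶠ n : ℕ in Filter.atTop, 3 ≤ n := Filter.eventually_ge_atTop 3
  obtain ⟨N, hN⟩ := Filter.eventually_atTop.mp ((h3.and hlog).and hboundN)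
  refine ⟨N, fun n hn => ?_⟩
  obtain ⟨⟨hn3, hl40⟩, hb⟩ := hN n hn
  refine ⟨hn3, hl40, ?_⟩
  have hnpos : (0:ℝ) < n := by
    have : (3:ℝ) ≤ n := by exact_mod_cast hn3
    linarith
  have hrp : (0:ℝ) ≤ (n:ℝ) ^ c := Real.rpow_nonneg (le_of_lt hnpos) c
  rw [Real.norm_eq_abs, Real.norm_eq_abs, abs_of_nonneg (by linarith),
    abs_of_nonneg hrp] at hb
  have key : 2*(q:ℝ)*Real.log n ≤ (2*(q:ℝ)) * ((1/(2*(q:ℝ)+1)) * (n:ℝ)^c) := by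
    have := mul_le_mul_of_nonneg_left hb (show (0:ℝ) ≤ 2*(q:ℝ) by positivity)
    linarith
  have k2 : (2*(q:ℝ)) * ((1/(2*(q:ℝ)+1)) * (n:ℝ)^c) = (2*(q:ℝ)/(2*(q:ℝ)+1)) * (n:ℝ)^c := by
    ring
  have k3 : 2*(q:ℝ)/(2*(q:ℝ)+1) ≤ 1 := by
    rw [div_le_one (by positivity)]; linarith
  have k4 : (2*(q:ℝ)/(2*(q:ℝ)+1)) * (n:ℝ)^c ≤ 1 * (n:ℝ)^c :=
    mul_le_mul_of_nonneg_right k3 hrp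
  rw [k2] at key
  linarith

lemma gnpExp_count (n : ℕ) (p : ℝ) (Q : Finset (Sym2 (Fin n)) → Prop) [DecidablePred Q] :
    gnpExp n p (fun E => ((E.powerset.filter Q).card : ℝ))
      = ∑ F ∈ (⊤ : SimpleGraph (Fin n)).edgeFinset.powerset.filter Q, p ^ F.card := by
  unfold gnpExp
  set M := (⊤ : SimpleGraph (Fin n)).edgeFinset with hM
  calc ∑ E ∈ M.powerset, p ^ E.card * (1 - p) ^ (M.card - E.card) * ((E.powerset.filter Q).card : ℝ)
      = ∑ E ∈ M.powerset, ∑ F ∈ E.powerset.filter Q,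
          p ^ E.card * (1 - p) ^ (M.card - E.card) := by
        refine Finset.sum_congr rfl fun E _ => ?_
        rw [Finset.sum_const, nsmul_eq_mul]
        ring
    _ = ∑ F ∈ M.powerset.filter Q, ∑ E ∈ M.powerset.filter (fun E => F ⊆ E),
          p ^ E.card * (1 - p) ^ (M.card - E.card) := by
        refine Finset.sum_comm' ?_
        intro E F
        simp only [mem_filter, mem_powerset]
        exact ⟨fun ⟨h1, h2, h3⟩ => ⟨⟨h1, h2⟩, h2.trans h1, h3⟩,
          fun ⟨⟨h1, h2⟩, _, h3⟩ => ⟨h1, h2, h3⟩⟩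
    _ = ∑ F ∈ M.powerset.filter Q, p ^ F.card := by
        refine Finset.sum_congr rfl fun F hF => ?_
        exact sum_superset_weight p M F (mem_powerset.mp (mem_filter.mp hF).1)

set_option maxHeartbeats 2000000

/-- **Lemma 15.** For every `r ≥ 4` there is `C(r) > 0` such that: if `n` is large,
`p > 0` satisfies `p n^{1/λ(r)} log n ≤ 1/(2e)`, `e` is an edge of `K_n` and
`λ(r) + 1 ≤ m ≤ C(r,2) log n`, then the expected number of `m`-edge subgraphs `F` of
`G_{n,p}` whose vertex set contains both endpoints of `e` and with
`m ≥ λ(r)(v(F) - 2) + 1` is at most `((m + C)/(2 C(r,2) log n))^{m - λ(r)}`. Here `v(F)` is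
the number of vertices incident to an edge of `F` or equal to an endpoint of `e`. -/
theorem expected_witness_sets_bound (r : ℕ) (hr : 4 ≤ r) :
    ∃ C : ℝ, 0 < C ∧ ∃ N : ℕ, ∀ n : ℕ, N ≤ n → ∀ p : ℝ, 0 < p →
      p * (n : ℝ) ^ (1 / lam r) * Real.log n ≤ 1 / (2 * Real.exp 1) →
      ∀ e ∈ (⊤ : SimpleGraph (Fin n)).edgeSet, ∀ m : ℕ,
        lam r + 1 ≤ (m : ℝ) → (m : ℝ) ≤ (r.choose 2 : ℝ) * Real.log n →
        gnpExp n p (fun E =>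
          ({F : Finset (Sym2 (Fin n)) | F ⊆ E ∧ F.card = m ∧
              (∀ v ∈ e, v ∈ {u : Fin n | ∃ f ∈ F, u ∈ f}) ∧
              lam r * (({u : Fin n | (∃ f ∈ F, u ∈ f) ∨ u ∈ e}.ncard : ℝ) - 2) + 1 ≤ (m : ℝ)
            }.ncard : ℝ))
          ≤ (((m : ℝ) + C) / (2 * (r.choose 2 : ℝ) * Real.log n)) ^ ((m : ℝ) - lam r) := by
  classical
  have hrR : (4:ℝ) ≤ (r:ℝ) := by exact_mod_cast hr
  have hqRf : ((r.choose 2 : ℕ) : ℝ) = (r:ℝ) * ((r:ℝ) - 1) / 2 := Nat.cast_choose_two (K := ℝ) r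
  have hq6 : (6:ℝ) ≤ ((r.choose 2 : ℕ) : ℝ) := by
    have h6 : (6:ℕ) ≤ r.choose 2 := by
      calc (6:ℕ) = Nat.choose 4 2 := by decide
        _ ≤ r.choose 2 := Nat.choose_le_choose 2 hr
    exact_mod_cast h6
  have hden : (0:ℝ) < (r:ℝ) - 2 := by linarith
  have hlam_def : lam r = (((r.choose 2 : ℕ) : ℝ) - 2) / ((r:ℝ) - 2) := rfl
  have hlam2 : (2:ℝ) ≤ lam r := by
    rw [hlam_def, le_div_iff₀ hden]
    nlinarith [hqRf]
  have hlampos : (0:ℝ) < lam r := by linarith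
  have hlamq : 2 * lam r ≤ ((r.choose 2 : ℕ) : ℝ) := by
    rw [hlam_def]
    rw [show (2:ℝ) * ((((r.choose 2 : ℕ) : ℝ) - 2) / ((r:ℝ) - 2))
      = (2 * (((r.choose 2 : ℕ) : ℝ) - 2)) / ((r:ℝ) - 2) by ring]
    rw [div_le_iff₀ hden]
    nlinarith [hq6]
  have hqlam : ((r.choose 2 : ℕ) : ℝ) ≤ 2 * (lam r)^2 := by
    rw [hlam_def, div_pow, show (2:ℝ) * ((((r.choose 2 : ℕ) : ℝ) - 2)^2 / ((r:ℝ) - 2)^2)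
      = (2 * (((r.choose 2 : ℕ) : ℝ) - 2)^2) / ((r:ℝ) - 2)^2 by ring,
      le_div_iff₀ (by positivity)]
    rw [hqRf]
    nlinarith [hrR, sq_nonneg ((r:ℝ) - 4), sq_nonneg ((r:ℝ) - 1)]
  obtain ⟨N, hN⟩ := exists_good_N (r.choose 2) (1 / lam r) (by positivity)
  refine ⟨20 * ((r.choose 2 : ℕ) : ℝ), by linarith, N, ?_⟩
  intro n hn p hp hpe
  refine Sym2.ind (fun a b => ?_)
  intro he m hm1 hm2
  have hne : a ≠ b := by simpa using he
  obtain ⟨hn3, hlog40, hgrow⟩ := hN n hn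
  set qR : ℝ := ((r.choose 2 : ℕ) : ℝ) with hqRdef
  set L : ℝ := Real.log n with hLdef
  have hLpos : (0:ℝ) < L := by linarith only [hlog40]
  have hqR0 : (0:ℝ) < qR := by linarith only [hq6]
  have hnR : (3:ℝ) ≤ (n:ℝ) := by exact_mod_cast hn3
  have hn1 : (1:ℝ) ≤ (n:ℝ) := by linarith only [hnR]
  have hn0 : (0:ℝ) < (n:ℝ) := by linarith only [hnR]
  set s : ℝ := (n:ℝ) ^ (1 / lam r) with hsdef
  have hspos : 0 < s := Real.rpow_pos_of_pos hn0 _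
  have h2qRL : (0:ℝ) < 2 * qR * L := by positivity
  set M := (⊤ : SimpleGraph (Fin n)).edgeFinset with hMdef
  set T : Finset (Sym2 (Fin n)) → Finset (Fin n) :=
    fun F => Finset.univ.filter (fun u => (∃ f ∈ F, u ∈ f) ∨ u ∈ s(a, b)) with hTdef
  set Q : Finset (Sym2 (Fin n)) → Prop := fun F =>
    F.card = m ∧ (∀ v ∈ s(a, b), v ∈ {u : Fin n | ∃ f ∈ F, u ∈ f}) ∧
      lam r * (({u : Fin n | (∃ f ∈ F, u ∈ f) ∨ u ∈ s(a, b)}.ncard : ℝ) - 2) + 1 ≤ (m : ℝ)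
    with hQdef
  have hncard : ∀ F : Finset (Sym2 (Fin n)),
      ({u : Fin n | (∃ f ∈ F, u ∈ f) ∨ u ∈ s(a, b)}.ncard) = (T F).card := by
    intro F
    rw [show {u : Fin n | (∃ f ∈ F, u ∈ f) ∨ u ∈ s(a, b)} = ↑(T F) by
      ext u; simp [hTdef]]
    exact Set.ncard_coe_finset _
  -- basic m facts
  have hmR0 : (0:ℝ) ≤ (m:ℝ) := Nat.cast_nonneg m
  have hm3R : (3:ℝ) ≤ (m:ℝ) := by linarith only [hm1, hlam2]
  have hmpos : (0:ℝ) < (m:ℝ) := by linarith only [hm3R]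
  have hlm : lam r ≤ (m:ℝ) := by linarith only [hm1]
  set B : ℝ := ((m:ℝ) + 20 * qR) / (2 * qR * L) with hBdef
  have hB0 : 0 < B := by
    apply div_pos _ h2qRL
    linarith only [hmR0, hqR0]
  -- Step A/B : expectation equals weighted count
  have hX : ∀ E : Finset (Sym2 (Fin n)),
      (({F : Finset (Sym2 (Fin n)) | F ⊆ E ∧ F.card = m ∧
          (∀ v ∈ s(a, b), v ∈ {u : Fin n | ∃ f ∈ F, u ∈ f}) ∧
          lam r * (({u : Fin n | (∃ f ∈ F, u ∈ f) ∨ u ∈ s(a, b)}.ncard : ℝ) - 2) + 1 ≤ (m : ℝ)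
        }.ncard : ℝ))
      = ((E.powerset.filter Q).card : ℝ) := by
    intro E
    have hset : {F : Finset (Sym2 (Fin n)) | F ⊆ E ∧ F.card = m ∧
          (∀ v ∈ s(a, b), v ∈ {u : Fin n | ∃ f ∈ F, u ∈ f}) ∧
          lam r * (({u : Fin n | (∃ f ∈ F, u ∈ f) ∨ u ∈ s(a, b)}.ncard : ℝ) - 2) + 1 ≤ (m : ℝ)}
        = ↑(E.powerset.filter Q) := by
      ext F
      simp only [Set.mem_setOf_eq, Finset.coe_filter, Finset.mem_powerset, hQdef]
    rw [hset, Set.ncard_coe_finset]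
  have efun : (fun E : Finset (Sym2 (Fin n)) =>
      (({F : Finset (Sym2 (Fin n)) | F ⊆ E ∧ F.card = m ∧
          (∀ v ∈ s(a, b), v ∈ {u : Fin n | ∃ f ∈ F, u ∈ f}) ∧
          lam r * (({u : Fin n | (∃ f ∈ F, u ∈ f) ∨ u ∈ s(a, b)}.ncard : ℝ) - 2) + 1 ≤ (m : ℝ)
        }.ncard : ℝ)))
      = (fun E : Finset (Sym2 (Fin n)) => ((E.powerset.filter Q).card : ℝ)) := funext hX
  rw [show gnpExp n p (fun E : Finset (Sym2 (Fin n)) =>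
      (({F : Finset (Sym2 (Fin n)) | F ⊆ E ∧ F.card = m ∧
          (∀ v ∈ s(a, b), v ∈ {u : Fin n | ∃ f ∈ F, u ∈ f}) ∧
          lam r * (({u : Fin n | (∃ f ∈ F, u ∈ f) ∨ u ∈ s(a, b)}.ncard : ℝ) - 2) + 1 ≤ (m : ℝ)
        }.ncard : ℝ)))
      = gnpExp n p (fun E : Finset (Sym2 (Fin n)) => ((E.powerset.filter Q).card : ℝ)) by
    rw [efun]]
  rw [gnpExp_count n p Q]
  -- Step B': sum of p^card over Q-sets
  have e2 : ∑ F ∈ M.powerset.filter Q, p ^ F.card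
      = ((M.powerset.filter Q).card : ℝ) * p ^ m := by
    rw [show ∑ F ∈ M.powerset.filter Q, p ^ F.card = ∑ F ∈ M.powerset.filter Q, p ^ m from
      Finset.sum_congr rfl fun F hF => by
        have hQF := (Finset.mem_filter.mp hF).2
        rw [hQdef] at hQF
        rw [hQF.1]]
    rw [Finset.sum_const, nsmul_eq_mul]
  rw [e2]
  have e3 : (M.powerset.filter Q).card
      = ∑ v ∈ Finset.range (n+1),
          ((M.powerset.filter Q).filter (fun F => (T F).card = v)).card := by
    apply Finset.card_eq_sum_card_fiberwise
    intro F _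
    simp only [Finset.mem_coe, Finset.mem_range]
    have h1 : (T F).card ≤ Fintype.card (Fin n) := Finset.card_le_univ _
    rw [Fintype.card_fin] at h1
    omega
  rw [e3]
  -- per-fiber bound
  have key : ∀ v ∈ Finset.range (n+1),
      ((((M.powerset.filter Q).filter (fun F => (T F).card = v)).card : ℝ)) * p ^ m
        ≤ (if v ≤ m + 2 then (n:ℝ) ^ (-(1/lam r)) * B ^ m else 0) := by
    intro v _
    set S := (M.powerset.filter Q).filter (fun F => (T F).card = v) with hSdef
    have hRHSnn : (0:ℝ) ≤ (n:ℝ) ^ (-(1/lam r)) * B ^ m :=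
      mul_nonneg (Real.rpow_nonneg hn0.le _) (pow_nonneg hB0.le _)
    rcases Finset.eq_empty_or_nonempty S with hSe | hSne
    · rw [hSe]
      simp only [Finset.card_empty, Nat.cast_zero, zero_mul]
      split
      · exact hRHSnn
      · exact le_rfl
    · obtain ⟨F0, hF0⟩ := hSne
      have hmem := Finset.mem_filter.mp hF0
      have hQ0 : Q F0 := (Finset.mem_filter.mp hmem.1).2
      have hTv : (T F0).card = v := hmem.2
      rw [hQdef] at hQ0
      obtain ⟨hc0, -, hden0⟩ := hQ0
      rw [hncard F0, hTv] at hden0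
      have habS : ∀ F ∈ S, a ∈ T F ∧ b ∈ T F := by
        intro F _
        constructor
        · simp only [hTdef, Finset.mem_filter, Finset.mem_univ, true_and]
          exact Or.inr (Sym2.mem_mk_left a b)
        · simp only [hTdef, Finset.mem_filter, Finset.mem_univ, true_and]
          exact Or.inr (Sym2.mem_mk_right a b)
      have h2v : 2 ≤ v := by
        rw [← hTv]
        have hsub : ({a, b} : Finset (Fin n)) ⊆ T F0 := by
          intro x hx
          simp only [Finset.mem_insert, Finset.mem_singleton] at hx
          rcases hx with rfl | rfl
          · exact (habS F0 hF0).1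
          · exact (habS F0 hF0).2
        calc 2 = ({a, b} : Finset (Fin n)).card := by
              rw [Finset.card_insert_of_notMem (by simp [hne]), Finset.card_singleton]
          _ ≤ (T F0).card := Finset.card_le_card hsub
      have hv2R : (2:ℝ) ≤ (v:ℝ) := by exact_mod_cast h2v
      have hvm : (v:ℝ) ≤ (m:ℝ) + 2 := by
        have hprod : 0 ≤ (lam r - 2) * ((v:ℝ) - 2) :=
          mul_nonneg (by linarith only [hlam2]) (by linarith only [hv2R])
        linarith only [hden0, hprod, hmR0]
      have hvm2 : v ≤ m + 2 := by exact_mod_cast hvm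
      rw [if_pos hvm2]
      have hcount : S.card ≤ (Fintype.card (Fin n)).choose (v-2)
          * ((v+1).choose 2).choose m := by
        apply fiber_count_bound S T a b hne m v h2v
        · intro F _ f hf u hu
          simp only [hTdef, Finset.mem_filter, Finset.mem_univ, true_and]
          exact Or.inl ⟨f, hf, hu⟩
        · exact habS
        · intro F hF
          have hQF := (Finset.mem_filter.mp (Finset.mem_filter.mp hF).1).2
          rw [hQdef] at hQF
          exact hQF.1
        · intro F hF
          exact (Finset.mem_filter.mp hF).2
      rw [Fintype.card_fin] at hcount
      -- real estimates
      set A2 : ℝ := (((v+1).choose 2 : ℕ) : ℝ) with hA2def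
      have hA2nn : (0:ℝ) ≤ A2 := Nat.cast_nonneg _
      have hp1 : p ≤ 1 / (2 * Real.exp 1 * (s * L)) := by
        rw [show (1:ℝ) / (2 * Real.exp 1 * (s * L)) = (1/(2*Real.exp 1)) / (s * L) from
          (div_div 1 (2*Real.exp 1) (s*L)).symm]
        rw [le_div_iff₀ (mul_pos hspos hLpos)]
        calc p * (s * L) = p * s * L := by ring
          _ ≤ 1/(2*Real.exp 1) := hpe
      have hppow : p ^ m ≤ (1 / (2 * Real.exp 1 * (s * L))) ^ m :=
        pow_le_pow_left₀ hp.le hp1 m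
      have c1 : ((n.choose (v-2) : ℕ) : ℝ) ≤ (n:ℝ) ^ (v-2) := by
        exact_mod_cast Nat.choose_le_pow n (v-2)
      have hfactpos : (0:ℝ) < (m.factorial : ℝ) := by exact_mod_cast m.factorial_pos
      have c2 : ((((v+1).choose 2).choose m : ℕ) : ℝ) ≤ A2 ^ m / (m.factorial : ℝ) := by
        have h := Nat.choose_le_pow_div (α := ℝ) m ((v+1).choose 2)
        rw [hA2def]
        push_cast at h ⊢
        convert h using 2
      have main1 : (S.card : ℝ) * p ^ m
          ≤ ((n:ℝ) ^ (v-2) * (A2 ^ m / (m.factorial : ℝ)))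
            * (1 / (2 * Real.exp 1 * (s * L))) ^ m := by
        apply mul_le_mul _ hppow (pow_nonneg hp.le m) _
        · calc (S.card : ℝ)
              ≤ ((n.choose (v-2) * (((v+1).choose 2).choose m) : ℕ) : ℝ) := by
                exact_mod_cast hcount
            _ = ((n.choose (v-2) : ℕ):ℝ) * ((((v+1).choose 2).choose m : ℕ):ℝ) := by
                push_cast; ring
            _ ≤ (n:ℝ)^(v-2) * (A2 ^ m / (m.factorial:ℝ)) := by
                apply mul_le_mul c1 c2 (Nat.cast_nonneg _) (by positivity)
        · have h1 : (0:ℝ) ≤ (n:ℝ)^(v-2) := by positivity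
          have h2 : (0:ℝ) ≤ A2 ^ m / (m.factorial:ℝ) := by positivity
          exact mul_nonneg h1 h2
      have h2eL : (0:ℝ) < 2*Real.exp 1*L := mul_pos (by positivity) hLpos
      have main2 : ((n:ℝ) ^ (v-2) * (A2 ^ m / (m.factorial:ℝ)))
            * (1 / (2*Real.exp 1*(s*L)))^m
          = ((n:ℝ)^(v-2) * (1/s)^m) * ((A2/(2*Real.exp 1*L))^m / (m.factorial:ℝ)) := by
        ring
      have hcast_v2 : (((v-2 : ℕ)) : ℝ) = (v:ℝ) - 2 := by
        rw [Nat.cast_sub h2v]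
        norm_num
      have G1 : (n:ℝ)^(v-2) * (1/s)^m ≤ (n:ℝ) ^ (-(1/lam r)) := by
        have hs_m : s ^ m = (n:ℝ) ^ ((1/lam r) * (m:ℝ)) := by
          rw [hsdef, ← Real.rpow_natCast ((n:ℝ) ^ (1/lam r)) m, ← Real.rpow_mul hn0.le]
        have hinv : (1/s)^m = (n:ℝ) ^ (-((1/lam r) * (m:ℝ))) := by
          rw [one_div, inv_pow, hs_m, ← Real.rpow_neg hn0.le]
        have hnp : (n:ℝ)^(v-2) = (n:ℝ) ^ (((v-2:ℕ)):ℝ) := (Real.rpow_natCast _ _).symm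
        rw [hinv, hnp, ← Real.rpow_add hn0]
        apply Real.rpow_le_rpow_of_exponent_le hn1
        rw [hcast_v2]
        have hd1 : ((v:ℝ) - 2) ≤ ((m:ℝ) - 1) / lam r := by
          rw [le_div_iff₀ hlampos]
          linarith only [hden0]
        have hd2 : ((m:ℝ) - 1)/lam r - (1/lam r) * (m:ℝ) = -(1/lam r) := by
          field_simp
          ring
        linarith only [hd1, hd2]
      have hfact : ((m:ℝ)/Real.exp 1)^m ≤ (m.factorial : ℝ) := by
        rw [div_pow, div_le_iff₀ (by positivity)]
        exact pow_self_le_factorial_mul_exp m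
      have hfp : (0:ℝ) < ((m:ℝ)/Real.exp 1)^m :=
        pow_pos (div_pos hmpos (Real.exp_pos 1)) m
      have G2a : (A2/(2*Real.exp 1*L))^m / (m.factorial:ℝ)
          ≤ (A2/(2*Real.exp 1*L))^m / ((m:ℝ)/Real.exp 1)^m := by
        gcongr
      have G2b : (A2/(2*Real.exp 1*L))^m / ((m:ℝ)/Real.exp 1)^m
          = (A2 / (2*L*(m:ℝ)))^m := by
        rw [← div_pow]
        have hee : Real.exp 1 ≠ 0 := (Real.exp_pos 1).ne'
        have hLne : L ≠ 0 := hLpos.ne'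
        have hmne : (m:ℝ) ≠ 0 := hmpos.ne'
        rw [show A2/(2*Real.exp 1*L) / ((m:ℝ)/Real.exp 1) = A2 / (2*L*(m:ℝ)) by
          rw [div_div]
          congr 1
          field_simp]
      have core : qR * ((v:ℝ)+1)^2 ≤ 2*(m:ℝ)*((m:ℝ) + 20*qR) := by
        have hb1 : lam r * ((v:ℝ)+1) ≤ (m:ℝ) + 3*lam r := by
          have hexp : lam r * ((v:ℝ)+1) = lam r*((v:ℝ)-2) + 3*lam r := by ring
          rw [hexp]; linarith only [hden0]
        have hb0 : 0 ≤ lam r * ((v:ℝ)+1) :=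
          mul_nonneg hlampos.le (by positivity)
        have hb2 : (lam r * ((v:ℝ)+1))^2 ≤ ((m:ℝ) + 3*lam r)^2 :=
          pow_le_pow_left₀ hb0 hb1 2
        rw [mul_pow] at hb2
        have hc1 : qR * ((v:ℝ)+1)^2 ≤ 2*(lam r)^2*((v:ℝ)+1)^2 := by
          calc qR * ((v:ℝ)+1)^2 ≤ (2*(lam r)^2) * ((v:ℝ)+1)^2 :=
                mul_le_mul_of_nonneg_right hqlam (sq_nonneg _)
            _ = 2*(lam r)^2*((v:ℝ)+1)^2 := by ring
        linarith only [hb2, hc1, mul_nonneg (sub_nonneg.mpr hlamq) hmR0,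
          mul_nonneg (sub_nonneg.mpr hlamq) hlampos.le,
          mul_nonneg (sub_nonneg.mpr hlm) hqR0.le,
          mul_nonneg hqR0.le hmR0]
      have c3 : A2 ≤ ((v:ℝ)+1)^2/2 := by
        rw [hA2def, Nat.cast_choose_two (K := ℝ)]
        push_cast
        linarith only [(Nat.cast_nonneg v : (0:ℝ) ≤ (v:ℝ))]
      have h2Lm : (0:ℝ) < 2*L*(m:ℝ) := mul_pos (mul_pos two_pos hLpos) hmpos
      have G2c : A2 / (2*L*(m:ℝ)) ≤ B := by
        rw [hBdef, div_le_div_iff₀ h2Lm h2qRL]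
        linarith only [mul_le_mul_of_nonneg_right c3 (le_of_lt h2qRL),
          mul_le_mul_of_nonneg_left core hLpos.le]
      have G2 : (A2/(2*Real.exp 1*L))^m / (m.factorial:ℝ) ≤ B^m := by
        refine G2a.trans ?_
        rw [G2b]
        exact pow_le_pow_left₀ (div_nonneg hA2nn h2Lm.le) G2c m
      calc (S.card:ℝ) * p^m
          ≤ ((n:ℝ) ^ (v-2) * (A2 ^ m / (m.factorial : ℝ)))
              * (1 / (2 * Real.exp 1 * (s * L))) ^ m := main1
        _ = ((n:ℝ)^(v-2) * (1/s)^m) * ((A2/(2*Real.exp 1*L))^m / (m.factorial:ℝ)) := main2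
        _ ≤ (n:ℝ) ^ (-(1/lam r)) * B^m := by
            apply mul_le_mul G1 G2 _ (Real.rpow_nonneg hn0.le _)
            exact div_nonneg (pow_nonneg (div_nonneg hA2nn h2eL.le) m) hfactpos.le
  -- sum the fiberwise bounds
  have sum1 : ((∑ v ∈ Finset.range (n+1),
        ((M.powerset.filter Q).filter (fun F => (T F).card = v)).card : ℕ) : ℝ) * p ^ m
      ≤ ((m:ℝ)+3) * ((n:ℝ) ^ (-(1/lam r)) * B ^ m) := by
    have hRHSnn : (0:ℝ) ≤ (n:ℝ) ^ (-(1/lam r)) * B ^ m :=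
      mul_nonneg (Real.rpow_nonneg hn0.le _) (pow_nonneg hB0.le _)
    calc ((∑ v ∈ Finset.range (n+1),
          ((M.powerset.filter Q).filter (fun F => (T F).card = v)).card : ℕ) : ℝ) * p ^ m
        = ∑ v ∈ Finset.range (n+1),
            ((((M.powerset.filter Q).filter (fun F => (T F).card = v)).card : ℝ) * p ^ m) := by
          rw [Nat.cast_sum, Finset.sum_mul]
      _ ≤ ∑ v ∈ Finset.range (n+1),
            (if v ≤ m + 2 then (n:ℝ) ^ (-(1/lam r)) * B ^ m else 0) :=
          Finset.sum_le_sum key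
      _ = ∑ v ∈ (Finset.range (n+1)).filter (fun v => v ≤ m+2),
            ((n:ℝ) ^ (-(1/lam r)) * B ^ m) := (Finset.sum_filter _ _).symm
      _ = (((Finset.range (n+1)).filter (fun v => v ≤ m+2)).card : ℝ)
            * ((n:ℝ) ^ (-(1/lam r)) * B ^ m) := by
          rw [Finset.sum_const, nsmul_eq_mul]
      _ ≤ ((m:ℝ)+3) * ((n:ℝ) ^ (-(1/lam r)) * B ^ m) := by
          apply mul_le_mul_of_nonneg_right _ hRHSnn
          have hcc : ((Finset.range (n+1)).filter (fun v => v ≤ m+2)).card ≤ m+3 := by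
            calc ((Finset.range (n+1)).filter (fun v => v ≤ m+2)).card
                ≤ (Finset.range (m+3)).card := by
                  apply Finset.card_le_card
                  intro x hx
                  simp only [Finset.mem_filter, Finset.mem_range] at hx ⊢
                  omega
              _ = m+3 := Finset.card_range _
          calc (((Finset.range (n+1)).filter (fun v => v ≤ m+2)).card : ℝ)
              ≤ ((m+3 : ℕ) : ℝ) := by exact_mod_cast hcc
            _ = (m:ℝ)+3 := by push_cast; ring
  refine sum1.trans ?_
  -- final step
  have hB34 : B ≤ 3/4 := by
    rw [hBdef, div_le_iff₀ h2qRL]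
    linarith only [hm2, mul_nonneg hqR0.le (sub_nonneg.mpr hlog40)]
  have hBlam : B ^ (lam r) ≤ (9:ℝ)/16 := by
    calc B ^ lam r ≤ ((3:ℝ)/4) ^ lam r := Real.rpow_le_rpow hB0.le hB34 hlampos.le
      _ ≤ ((3:ℝ)/4) ^ (2:ℝ) := Real.rpow_le_rpow_of_exponent_ge (by norm_num) (by norm_num) hlam2
      _ = 9/16 := by
          rw [show (2:ℝ) = ((2:ℕ):ℝ) by norm_num, Real.rpow_natCast]
          norm_num
  have hninv : (n:ℝ) ^ (-(1/lam r)) ≤ 1/(2*qR*L) := by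
    rw [Real.rpow_neg hn0.le]
    exact le_trans (inv_anti₀ h2qRL hgrow) (le_of_eq (one_div _).symm)
  have hBm : B ^ m = B ^ ((m:ℝ) - lam r) * B ^ (lam r) := by
    rw [← Real.rpow_natCast B m, ← Real.rpow_add hB0]
    congr 1
    ring
  have h1 : ((m:ℝ)+3) * (n:ℝ) ^ (-(1/lam r)) * B ^ (lam r) ≤ 1 := by
    have f1 : ((m:ℝ)+3) ≤ 2*qR*L := by
      linarith only [hm2, mul_nonneg (sub_nonneg.mpr hq6) hLpos.le, hlog40]
    calc ((m:ℝ)+3) * (n:ℝ) ^ (-(1/lam r)) * B ^ (lam r)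
        ≤ ((2*qR*L) * (1/(2*qR*L))) * (9/16) := by
          apply mul_le_mul _ hBlam (Real.rpow_nonneg hB0.le _)
            (mul_pos h2qRL (one_div_pos.mpr h2qRL)).le
          exact mul_le_mul f1 hninv (Real.rpow_nonneg hn0.le _) h2qRL.le
      _ = 9/16 := by
          rw [mul_one_div, div_self h2qRL.ne']
          norm_num
      _ ≤ 1 := by norm_num
  calc ((m:ℝ)+3) * ((n:ℝ) ^ (-(1/lam r)) * B ^ m)
      = (((m:ℝ)+3) * (n:ℝ) ^ (-(1/lam r)) * B ^ (lam r)) * B ^ ((m:ℝ) - lam r) := by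
        rw [hBm]; ring
    _ ≤ 1 * B ^ ((m:ℝ) - lam r) :=
        mul_le_mul_of_nonneg_right h1 (Real.rpow_nonneg hB0.le _)
    _ = B ^ ((m:ℝ) - lam r) := one_mul _
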